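/- Let n ≥ 1, s < 0 and 1 ≤ p, q ≤ ∞. There exist constants c, C > 0, depending only on n, s, q and the choice of χ, such that for every Schwartz function f on ℝⁿ, c (Σ_{j∈ℤ} (2^{sj} ‖Δ_j f‖_{L^p})^q)^{1/q} ≤ (Σ_{j∈ℤ} (2^{sj} ‖S_j f‖_{L^p})^q)^{1/q} ≤ C (Σ_{j∈ℤ} (2^{sj} ‖Δ_j f‖_{L^p})^q)^{1/q}, with the usual supremum modification when q = ∞, both inequalities being understood in [0,∞]. -/

import Mathlib

open MeasureTheory Real Complex Filter Function
open scoped ENNReal FourierTransform SchwartzMap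
open scoped Topology RealInnerProductSpace

noncomputable section

/-- The properties of the radial smooth cutoff `χ` used to build the
Littlewood–Paley decomposition: smooth, compactly supported, radial,
`0 ≤ χ ≤ 1`, `χ = 1` on `{‖ξ‖ ≤ 3/4}` and `χ = 0` on `{‖ξ‖ > 4/3}`. -/
def IsLPCutoff {n : ℕ} (χ : EuclideanSpace ℝ (Fin n) → ℝ) : Prop :=
  ContDiff ℝ ((⊤ : ℕ∞) : WithTop ℕ∞) χ ∧ HasCompactSupport χ ∧
    (∀ ξ η, ‖ξ‖ = ‖η‖ → χ ξ = χ η) ∧ (∀ ξ, 0 ≤ χ ξ) ∧ (∀ ξ, χ ξ ≤ 1) ∧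
    (∀ ξ, ‖ξ‖ ≤ 3 / 4 → χ ξ = 1) ∧ (∀ ξ, 4 / 3 < ‖ξ‖ → χ ξ = 0)

/-- The low-frequency Littlewood–Paley projection `S_j f = 𝓕⁻¹(χ(·/2^j) 𝓕 f)`. -/
def Sproj {n : ℕ} (χ : EuclideanSpace ℝ (Fin n) → ℝ) (j : ℤ)
    (f : EuclideanSpace ℝ (Fin n) → ℂ) : EuclideanSpace ℝ (Fin n) → ℂ :=
  𝓕⁻ fun ξ => ((χ ((2 : ℝ) ^ (-j) • ξ) : ℝ) : ℂ) * 𝓕 f ξ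

/-- The Littlewood–Paley block `Δ_j f = 𝓕⁻¹(φ̂(·/2^j) 𝓕 f)`, where
`φ̂(ξ) = χ(ξ/2) - χ(ξ)`, i.e. `φ̂(ξ/2^j) = χ(ξ/2^(j+1)) - χ(ξ/2^j)`. -/
def Dproj {n : ℕ} (χ : EuclideanSpace ℝ (Fin n) → ℝ) (j : ℤ)
    (f : EuclideanSpace ℝ (Fin n) → ℂ) : EuclideanSpace ℝ (Fin n) → ℂ :=
  𝓕⁻ fun ξ => ((χ ((2 : ℝ) ^ (-(j + 1)) • ξ) - χ ((2 : ℝ) ^ (-j) • ξ) : ℝ) : ℂ) * 𝓕 f ξ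

/-- The `ℓ^q(ℤ)` norm of a sequence of extended nonnegative reals, with the usual
supremum modification for `q = ∞`. -/
def lqNorm (q : ℝ≥0∞) (a : ℤ → ℝ≥0∞) : ℝ≥0∞ :=
  if q = ∞ then ⨆ j, a j else (∑' j, a j ^ q.toReal) ^ (1 / q.toReal)

/-- The homogeneous Besov norm `‖f‖_{Ḃ^s_{p,q}}`, valued in `[0,∞]`. -/
def besovNorm {n : ℕ} (χ : EuclideanSpace ℝ (Fin n) → ℝ) (s : ℝ) (p q : ℝ≥0∞)
    (f : EuclideanSpace ℝ (Fin n) → ℂ) : ℝ≥0∞ :=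
  lqNorm q fun j => (2 : ℝ≥0∞) ^ ((j : ℝ) * s) * eLpNorm (Dproj χ j f) p volume

namespace LPAux


lemma lqNorm_mono {q : ℝ≥0∞} {a b : ℤ → ℝ≥0∞} (h : ∀ j, a j ≤ b j) :
    lqNorm q a ≤ lqNorm q b := by
  unfold lqNorm
  split
  · exact iSup_mono h
  · exact ENNReal.rpow_le_rpow
      (ENNReal.tsum_le_tsum fun j => ENNReal.rpow_le_rpow (h j) ENNReal.toReal_nonneg)
      (by positivity)

lemma lqNorm_shift (q : ℝ≥0∞) (a : ℤ → ℝ≥0∞) (k : ℤ) :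
    lqNorm q (fun j => a (j + k)) = lqNorm q a := by
  unfold lqNorm
  split
  · exact (Equiv.addRight k).iSup_comp (g := a)
  · congr 1
    exact (Equiv.addRight k).tsum_eq (fun j => a j ^ q.toReal)

lemma toReal_pos {q : ℝ≥0∞} (hq : 1 ≤ q) (hqt : ¬ q = ∞) : 0 < q.toReal := by
  have : (1 : ℝ≥0∞).toReal ≤ q.toReal := ENNReal.toReal_mono hqt hq
  simpa using lt_of_lt_of_le one_pos this

lemma lqNorm_const_mul {q : ℝ≥0∞} (hq : 1 ≤ q) (r : ℝ≥0∞) (a : ℤ → ℝ≥0∞) :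
    lqNorm q (fun j => r * a j) = r * lqNorm q a := by
  unfold lqNorm
  split
  · exact (ENNReal.mul_iSup (a := r) (f := a)).symm
  · next hqt =>
    have ht : 0 < q.toReal := toReal_pos hq hqt
    simp_rw [ENNReal.mul_rpow_of_nonneg _ _ ht.le, ENNReal.tsum_mul_left,
      ENNReal.mul_rpow_of_nonneg _ _ (by positivity : (0:ℝ) ≤ 1 / q.toReal),
      ← ENNReal.rpow_mul, mul_one_div, div_self ht.ne', ENNReal.rpow_one]

lemma lqNorm_add_le {q : ℝ≥0∞} (hq : 1 ≤ q) (a b : ℤ → ℝ≥0∞) :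
    lqNorm q (fun j => a j + b j) ≤ lqNorm q a + lqNorm q b := by
  unfold lqNorm
  split
  · exact iSup_le fun j => add_le_add (le_iSup a j) (le_iSup b j)
  · next hqt =>
    have ht : (1:ℝ) ≤ q.toReal := by
      have := ENNReal.toReal_mono hqt hq; simpa using this
    simp_rw [← MeasureTheory.lintegral_count]
    exact ENNReal.lintegral_Lp_add_le (measurable_of_countable a).aemeasurable
      (measurable_of_countable b).aemeasurable ht

lemma lqNorm_zero (q : ℝ≥0∞) (hq : 1 ≤ q) : lqNorm q (fun _ => (0:ℝ≥0∞)) = 0 := by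
  unfold lqNorm
  split
  · simp
  · next hqt =>
    have ht : 0 < q.toReal := toReal_pos hq hqt
    simp_rw [ENNReal.zero_rpow_of_pos ht, tsum_zero, ENNReal.zero_rpow_of_pos (one_div_pos.mpr ht)]

lemma lqNorm_finsum_le {q : ℝ≥0∞} (hq : 1 ≤ q) (c : ℕ → ℤ → ℝ≥0∞) (M : ℕ) :
    lqNorm q (fun j => ∑ m ∈ Finset.range M, c m j) ≤ ∑ m ∈ Finset.range M, lqNorm q (c m) := by
  induction M with
  | zero => simp [lqNorm_zero q hq]
  | succ M ih =>
    simp_rw [Finset.sum_range_succ]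
    exact le_trans (lqNorm_add_le hq _ _) (add_le_add_left ih _)

lemma lqNorm_tsum_le {q : ℝ≥0∞} (hq : 1 ≤ q) (c : ℕ → ℤ → ℝ≥0∞) :
    lqNorm q (fun j => ∑' m, c m j) ≤ ∑' m, lqNorm q (c m) := by
  by_cases hqt : q = ∞
  · subst hqt
    simp only [lqNorm, if_pos rfl]
    exact iSup_le fun j => ENNReal.tsum_le_tsum fun m => le_iSup_of_le j le_rfl
  · have ht : 0 < q.toReal := toReal_pos hq hqt
    set t := q.toReal
    have key : (∑' j, (∑' m, c m j) ^ t)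
        = ⨆ M : ℕ, ∑' j, (∑ m ∈ Finset.range M, c m j) ^ t := by
      have h1 : ∀ j, (∑' m, c m j) ^ t = ⨆ M : ℕ, (∑ m ∈ Finset.range M, c m j) ^ t := by
        intro j
        rw [ENNReal.tsum_eq_iSup_nat]
        exact (ENNReal.orderIsoRpow t ht).map_iSup _
      simp_rw [h1, ← MeasureTheory.lintegral_count]
      refine MeasureTheory.lintegral_iSup (fun M => measurable_of_countable _) ?_
      intro M M' hMM' j
      exact ENNReal.rpow_le_rpow
        (Finset.sum_le_sum_of_subset (Finset.range_subset_range.2 hMM')) ht.le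
    have hbound : ∀ M : ℕ, (∑' j, (∑ m ∈ Finset.range M, c m j) ^ t)
        ≤ (∑' m, lqNorm q (c m)) ^ t := by
      intro M
      have h2 := lqNorm_finsum_le hq c M
      have h3 : lqNorm q (fun j => ∑ m ∈ Finset.range M, c m j)
          = (∑' j, (∑ m ∈ Finset.range M, c m j) ^ t) ^ (1 / t) := by
        simp [lqNorm, hqt, t]
      have h4 : ((∑' j, (∑ m ∈ Finset.range M, c m j) ^ t) ^ (1 / t)) ^ t
          ≤ ((∑' m, lqNorm q (c m)) : ℝ≥0∞) ^ t := by
        refine ENNReal.rpow_le_rpow ?_ ht.le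
        rw [← h3]
        exact h2.trans (ENNReal.sum_le_tsum _)
      rwa [← ENNReal.rpow_mul, one_div, inv_mul_cancel₀ ht.ne', ENNReal.rpow_one] at h4
    have : lqNorm q (fun j => ∑' m, c m j)
        = (∑' j, (∑' m, c m j) ^ t) ^ (1 / t) := by simp [lqNorm, hqt, t]
    rw [this, key]
    calc (⨆ M : ℕ, ∑' j, (∑ m ∈ Finset.range M, c m j) ^ t) ^ (1 / t)
        ≤ ((∑' m, lqNorm q (c m)) ^ t) ^ (1 / t) :=
          ENNReal.rpow_le_rpow (iSup_le hbound) (by positivity)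
      _ = ∑' m, lqNorm q (c m) := by
          rw [← ENNReal.rpow_mul, mul_one_div, div_self ht.ne', ENNReal.rpow_one]



variable {n : ℕ} {χ : EuclideanSpace ℝ (Fin n) → ℝ} (hχ : IsLPCutoff χ)
variable (f : 𝓢(EuclideanSpace ℝ (Fin n), ℂ))

local notation "V" => EuclideanSpace ℝ (Fin n)

lemma integrable_fourier : Integrable (𝓕 ⇑f) (volume : Measure V) := by
  have := (SchwartzMap.fourierTransformCLM ℂ f).integrable (μ := (volume : Measure V))
  simp at this; exact this

lemma continuous_fourier : Continuous (𝓕 ⇑f) := by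
  have := (SchwartzMap.fourierTransformCLM ℂ f).continuous
  simp at this; exact this

include hχ in
lemma integrable_mul (j : ℤ) :
    Integrable (fun ξ : V => ((χ ((2 : ℝ) ^ (-j) • ξ) : ℝ) : ℂ) * 𝓕 ⇑f ξ) volume := by
  refine (integrable_fourier f).bdd_mul (c := 1) ?_ (ae_of_all _ fun x => ?_)
  · exact (Complex.continuous_ofReal.comp
      (hχ.1.continuous.comp (continuous_const_smul _))).aestronglyMeasurable
  · simpa using abs_le.2 ⟨by linarith [hχ.2.2.2.1 ((2 : ℝ) ^ (-j) • x)],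
      hχ.2.2.2.2.1 ((2 : ℝ) ^ (-j) • x)⟩

include hχ in
lemma integrable_mul' (j : ℤ) :
    Integrable (fun ξ : V =>
      ((χ ((2 : ℝ) ^ (-(j + 1)) • ξ) - χ ((2 : ℝ) ^ (-j) • ξ) : ℝ) : ℂ) * 𝓕 ⇑f ξ) volume := by
  refine (integrable_fourier f).bdd_mul (c := 2) ?_ (ae_of_all _ fun x => ?_)
  · exact (Complex.continuous_ofReal.comp
      ((hχ.1.continuous.comp (continuous_const_smul _)).sub
        (hχ.1.continuous.comp (continuous_const_smul _)))).aestronglyMeasurable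
  · have h1 := hχ.2.2.2.1 ((2 : ℝ) ^ (-(j + 1)) • x)
    have h2 := hχ.2.2.2.2.1 ((2 : ℝ) ^ (-(j + 1)) • x)
    have h3 := hχ.2.2.2.1 ((2 : ℝ) ^ (-j) • x)
    have h4 := hχ.2.2.2.2.1 ((2 : ℝ) ^ (-j) • x)
    rw [Complex.norm_real, Real.norm_eq_abs, abs_sub_le_iff]
    constructor <;> linarith

lemma continuous_inv {h : V → ℂ} (hh : Integrable h volume) : Continuous (𝓕⁻ h) :=
  VectorFourier.fourierIntegral_continuous Real.continuous_fourierChar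
    (continuous_inner.neg) hh

lemma norm_inv_le (h : V → ℂ) (x : V) : ‖𝓕⁻ h x‖ ≤ ∫ ξ, ‖h ξ‖ := by
  rw [Real.fourierInv_eq']
  refine (norm_integral_le_integral_norm _).trans (le_of_eq ?_)
  congr with ξ
  rw [smul_eq_mul, norm_mul, Complex.norm_exp_ofReal_mul_I, one_mul]

include hχ in
lemma sproj_continuous (j : ℤ) : Continuous (Sproj χ j ⇑f) :=
  continuous_inv (integrable_mul hχ f j)

lemma exp_mul_integrable (x : V) {h : V → ℂ} (hh : Integrable h volume) :
    Integrable (fun ξ : V => Complex.exp (((2 * π * ⟪ξ, x⟫ : ℝ) : ℂ) * Complex.I) * h ξ)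
      volume := by
  refine hh.bdd_mul (c := 1) ?_ (ae_of_all _ fun ξ => le_of_eq (Complex.norm_exp_ofReal_mul_I _))
  exact (Complex.continuous_exp.comp
    ((Complex.continuous_ofReal.comp
      ((continuous_const.mul (continuous_id.inner continuous_const)))).mul
      continuous_const)).aestronglyMeasurable

include hχ in
lemma dproj_eq (j : ℤ) :
    Dproj χ j ⇑f = fun x => Sproj χ (j + 1) ⇑f x - Sproj χ j ⇑f x := by
  funext x
  unfold Dproj Sproj
  rw [Real.fourierInv_eq', Real.fourierInv_eq', Real.fourierInv_eq']
  simp only [smul_eq_mul]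
  rw [← integral_sub (exp_mul_integrable x (integrable_mul hχ f (j+1)))
      (exp_mul_integrable x (integrable_mul hχ f j))]
  congr with ξ
  push_cast
  ring

include hχ in
lemma dproj_continuous (j : ℤ) : Continuous (Dproj χ j ⇑f) := by
  rw [dproj_eq hχ f j]
  exact (sproj_continuous hχ f (j+1)).sub (sproj_continuous hχ f j)

include hχ in
lemma sproj_tendsto (hn : 1 ≤ n) (x : V) :
    Tendsto (fun N : ℤ => Sproj χ N ⇑f x) atBot (𝓝 0) := by
  rw [tendsto_zero_iff_norm_tendsto_zero]
  have hbound : ∀ N : ℤ, ‖Sproj χ N ⇑f x‖ ≤ ∫ ξ, |χ ((2 : ℝ) ^ (-N) • ξ)| * ‖𝓕 ⇑f ξ‖ := by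
    intro N
    refine (norm_inv_le _ x).trans (le_of_eq ?_)
    congr with ξ
    rw [norm_mul, Complex.norm_real, Real.norm_eq_abs]
  refine squeeze_zero (fun N => norm_nonneg _) hbound ?_
  have h0 : Tendsto (fun N : ℤ => ∫ ξ : V, |χ ((2 : ℝ) ^ (-N) • ξ)| * ‖𝓕 ⇑f ξ‖) atBot
      (𝓝 (∫ _ : V, (0:ℝ))) := by
    apply tendsto_integral_filter_of_dominated_convergence (fun ξ => ‖𝓕 ⇑f ξ‖)
    · filter_upwards with N
      exact ((_root_.continuous_abs.comp (hχ.1.continuous.comp (continuous_const_smul _))).mul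
        (continuous_fourier f).norm).aestronglyMeasurable
    · filter_upwards with N
      filter_upwards with ξ
      rw [Real.norm_eq_abs, _root_.abs_of_nonneg (by positivity)]
      have h1 : |χ ((2 : ℝ) ^ (-N) • ξ)| ≤ 1 := abs_le.2 ⟨by linarith [hχ.2.2.2.1 ((2 : ℝ) ^ (-N) • ξ)], hχ.2.2.2.2.1 _⟩
      nlinarith [norm_nonneg (𝓕 ⇑f ξ), abs_nonneg (χ ((2 : ℝ) ^ (-N) • ξ))]
    · exact (integrable_fourier f).norm
    · have hzero : ∀ᵐ ξ : V, ξ ≠ 0 := by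
        haveI : Nonempty (Fin n) := ⟨⟨0, hn⟩⟩
        rw [ae_iff]
        simp only [not_not]
        have : {ξ : V | ξ = 0} = {0} := by ext; simp
        rw [this]
        exact measure_singleton 0
      filter_upwards [hzero] with ξ hξ
      have hξ' : 0 < ‖ξ‖ := norm_pos_iff.2 hξ
      obtain ⟨k, hk⟩ := pow_unbounded_of_one_lt ((4/3) / ‖ξ‖) (by norm_num : (1:ℝ) < 2)
      have hev : ∀ᶠ N : ℤ in atBot, |χ ((2 : ℝ) ^ (-N) • ξ)| * ‖𝓕 ⇑f ξ‖ = 0 := by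
        filter_upwards [eventually_le_atBot (-(k:ℤ))] with N hN
        have h2 : (2:ℝ) ^ (k:ℤ) ≤ (2:ℝ) ^ (-N) := by
          apply zpow_le_zpow_right₀ (by norm_num) (by omega)
        have hgt : 4/3 < ‖(2 : ℝ) ^ (-N) • ξ‖ := by
          rw [norm_smul, Real.norm_eq_abs, abs_of_pos (by positivity)]
          have : (4/3 : ℝ) < 2 ^ (k:ℤ) * ‖ξ‖ := by
            rw [zpow_natCast]
            rw [div_lt_iff₀ hξ'] at hk
            linarith
          nlinarith [hξ'.le]
        rw [hχ.2.2.2.2.2.2 _ hgt]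
        simp
      exact Tendsto.congr' (by filter_upwards [hev] with N h using h.symm) tendsto_const_nhds
  simpa using h0



include hχ in
lemma telescope (j : ℤ) (M : ℕ) (x : V) :
    ∑ i ∈ Finset.range M, Dproj χ (j - 1 - i) ⇑f x
      = Sproj χ j ⇑f x - Sproj χ (j - M) ⇑f x := by
  induction M with
  | zero => simp
  | succ M ih =>
    rw [Finset.sum_range_succ, ih]
    simp only [dproj_eq hχ f]
    rw [show (j - 1 - (M:ℤ)) + 1 = j - M by ring,
      show (j : ℤ) - ((M:ℕ)+1 : ℕ) = j - 1 - (M:ℤ) by push_cast; ring]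
    ring

include hχ in
lemma dproj_eLpNorm_le {p : ℝ≥0∞} (hp : 1 ≤ p) (j : ℤ) :
    eLpNorm (Dproj χ j ⇑f) p volume
      ≤ eLpNorm (Sproj χ (j + 1) ⇑f) p volume + eLpNorm (Sproj χ j ⇑f) p volume := by
  rw [dproj_eq hχ f j]
  exact eLpNorm_sub_le (sproj_continuous hχ f (j+1)).aestronglyMeasurable
    (sproj_continuous hχ f j).aestronglyMeasurable hp

include hχ in
lemma sproj_eLpNorm_le (hn : 1 ≤ n) {p : ℝ≥0∞} (hp : 1 ≤ p) (j : ℤ) :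
    eLpNorm (Sproj χ j ⇑f) p volume
      ≤ ∑' i : ℕ, eLpNorm (Dproj χ (j - 1 - i) ⇑f) p volume := by
  have hmeas : ∀ M : ℕ, AEStronglyMeasurable
      (fun x : V => ∑ i ∈ Finset.range M, Dproj χ (j - 1 - i) ⇑f x) volume := fun M =>
    (continuous_finset_sum _ fun i _ => dproj_continuous hχ f _).aestronglyMeasurable
  have hlim : ∀ x : V, Tendsto (fun M : ℕ => ∑ i ∈ Finset.range M, Dproj χ (j - 1 - i) ⇑f x)
      atTop (𝓝 (Sproj χ j ⇑f x)) := by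
    intro x
    simp_rw [telescope hχ f j _ x]
    have h1 : Tendsto (fun M : ℕ => j - (M:ℤ)) atTop atBot :=
      tendsto_atBot.2 fun b => eventually_atTop.2 ⟨(j - b).toNat, fun M hM => by omega⟩
    have h2 : Tendsto (fun M : ℕ => Sproj χ (j - M) ⇑f x) atTop (𝓝 0) :=
      (sproj_tendsto hχ f hn x).comp h1
    simpa using tendsto_const_nhds.sub h2
  calc eLpNorm (Sproj χ j ⇑f) p volume
      ≤ atTop.liminf fun M : ℕ =>
          eLpNorm (fun x : V => ∑ i ∈ Finset.range M, Dproj χ (j - 1 - i) ⇑f x) p volume :=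
        MeasureTheory.Lp.eLpNorm_lim_le_liminf_eLpNorm hmeas _ (ae_of_all _ hlim)
    _ ≤ ∑' i : ℕ, eLpNorm (Dproj χ (j - 1 - i) ⇑f) p volume := by
        have hb : ∀ M : ℕ,
            eLpNorm (fun x : V => ∑ i ∈ Finset.range M, Dproj χ (j - 1 - i) ⇑f x) p volume
              ≤ ∑' i : ℕ, eLpNorm (Dproj χ (j - 1 - i) ⇑f) p volume := by
          intro M
          have h3 := eLpNorm_sum_le (μ := (volume : Measure V))
            (f := fun i : ℕ => Dproj χ (j - 1 - i) ⇑f) (s := Finset.range M)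
            (fun i _ => (dproj_continuous hχ f _).aestronglyMeasurable) hp
          have h4 : (∑ i ∈ Finset.range M, Dproj χ (j - 1 - i) ⇑f)
              = fun x : V => ∑ i ∈ Finset.range M, Dproj χ (j - 1 - i) ⇑f x := by
            funext x; simp
          rw [h4] at h3
          exact h3.trans (ENNReal.sum_le_tsum _)
        refine (liminf_le_liminf (Eventually.of_forall hb)).trans ?_
        simp [liminf_const]


end LPAux

/-- **Equivalence of the `Δ_j` and `S_j` characterizations of negative-order Besov
norms**: for `s < 0` and `1 ≤ q ≤ ∞` there are constants `c, C > 0`, depending only on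
`n`, `s`, `q` and `χ` (in particular independent of `p` and `f`), such that for every
`p ∈ [1,∞]` and every Schwartz `f`,
`c (Σ_j (2^{sj}‖Δ_j f‖_p)^q)^{1/q} ≤ (Σ_j (2^{sj}‖S_j f‖_p)^q)^{1/q}
≤ C (Σ_j (2^{sj}‖Δ_j f‖_p)^q)^{1/q}` (supremum modification if `q = ∞`). -/
theorem besov_lowFreq_equiv
    (n : ℕ) (hn : 1 ≤ n) (χ : EuclideanSpace ℝ (Fin n) → ℝ) (hχ : IsLPCutoff χ)
    (s : ℝ) (hs : s < 0) (q : ℝ≥0∞) (hq : 1 ≤ q) :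
    ∃ c C : ℝ≥0∞, 0 < c ∧ c < ∞ ∧ 0 < C ∧ C < ∞ ∧
      ∀ p : ℝ≥0∞, 1 ≤ p → ∀ f : 𝓢(EuclideanSpace ℝ (Fin n), ℂ),
        c * lqNorm q (fun j => (2 : ℝ≥0∞) ^ ((j : ℝ) * s) * eLpNorm (Dproj χ j (⇑f)) p volume)
            ≤ lqNorm q (fun j => (2 : ℝ≥0∞) ^ ((j : ℝ) * s) * eLpNorm (Sproj χ j (⇑f)) p volume) ∧
          lqNorm q (fun j => (2 : ℝ≥0∞) ^ ((j : ℝ) * s) * eLpNorm (Sproj χ j (⇑f)) p volume)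
            ≤ C * lqNorm q
                (fun j => (2 : ℝ≥0∞) ^ ((j : ℝ) * s) * eLpNorm (Dproj χ j (⇑f)) p volume) := by
  classical
  have h2top : (2:ℝ≥0∞) ≠ ⊤ := ENNReal.ofNat_ne_top
  have h20 : (2:ℝ≥0∞) ≠ 0 := two_ne_zero
  have hrs : (2:ℝ≥0∞) ^ (-s) ≠ ⊤ := ENNReal.rpow_ne_top_of_nonneg (by linarith) h2top
  have hne0 : (2:ℝ≥0∞) ^ (-s) + 1 ≠ 0 := (lt_of_lt_of_le zero_lt_one le_add_self).ne'
  have hnetop : (2:ℝ≥0∞) ^ (-s) + 1 ≠ ⊤ := ENNReal.add_ne_top.2 ⟨hrs, ENNReal.one_ne_top⟩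
  refine ⟨((2:ℝ≥0∞) ^ (-s) + 1)⁻¹, ∑' i : ℕ, (2:ℝ≥0∞) ^ (((i:ℝ)+1)*s), ?_, ?_, ?_, ?_, ?_⟩
  · exact ENNReal.inv_pos.2 hnetop
  · exact ENNReal.inv_lt_top.2 (lt_of_lt_of_le zero_lt_one le_add_self)
  · exact lt_of_lt_of_le (ENNReal.rpow_pos (by norm_num) h2top) (ENNReal.le_tsum 0)
  · have hkey : ∀ i : ℕ, (2:ℝ≥0∞) ^ (((i:ℝ)+1)*s) = ((2:ℝ≥0∞) ^ s) ^ i * (2:ℝ≥0∞) ^ s := by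
      intro i
      rw [← pow_succ, ← ENNReal.rpow_natCast ((2:ℝ≥0∞)^s) (i+1), ← ENNReal.rpow_mul]
      congr 1; push_cast; ring
    have hr1 : (2:ℝ≥0∞) ^ s < 1 :=
      ENNReal.rpow_lt_one_of_one_lt_of_neg (by norm_num) hs
    calc ∑' i:ℕ, (2:ℝ≥0∞) ^ (((i:ℝ)+1)*s) = ∑' i:ℕ, ((2:ℝ≥0∞)^s)^i * (2:ℝ≥0∞)^s := by
          simp_rw [hkey]
      _ = (∑' i:ℕ, ((2:ℝ≥0∞)^s)^i) * (2:ℝ≥0∞)^s := ENNReal.tsum_mul_right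
      _ = (1 - (2:ℝ≥0∞)^s)⁻¹ * (2:ℝ≥0∞)^s := by rw [ENNReal.tsum_geometric]
      _ < ⊤ := ENNReal.mul_lt_top (ENNReal.inv_lt_top.2 (tsub_pos_of_lt hr1))
          (hr1.trans ENNReal.one_lt_top)
  · intro p hp f
    set a : ℤ → ℝ≥0∞ :=
      fun j => (2:ℝ≥0∞) ^ ((j:ℝ)*s) * eLpNorm (Dproj χ j (⇑f)) p volume with ha
    set b : ℤ → ℝ≥0∞ :=
      fun j => (2:ℝ≥0∞) ^ ((j:ℝ)*s) * eLpNorm (Sproj χ j (⇑f)) p volume with hbdef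
    constructor
    · have hab : ∀ j, a j ≤ (2:ℝ≥0∞)^(-s) * b (j+1) + b j := by
        intro j
        have h := LPAux.dproj_eLpNorm_le hχ f hp j
        calc a j ≤ (2:ℝ≥0∞) ^ ((j:ℝ)*s) * (eLpNorm (Sproj χ (j+1) (⇑f)) p volume
              + eLpNorm (Sproj χ j (⇑f)) p volume) := mul_le_mul_right h _
          _ = (2:ℝ≥0∞) ^ ((j:ℝ)*s) * eLpNorm (Sproj χ (j+1) (⇑f)) p volume + b j := by
              rw [mul_add]
          _ = (2:ℝ≥0∞)^(-s) * b (j+1) + b j := by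
              congr 1
              rw [hbdef]
              dsimp only
              rw [show ((j:ℝ))*s = -s + (((j+1 : ℤ)):ℝ)*s by push_cast; ring,
                ENNReal.rpow_add _ _ h20 h2top, mul_assoc]
      calc ((2:ℝ≥0∞)^(-s)+1)⁻¹ * lqNorm q a
          ≤ ((2:ℝ≥0∞)^(-s)+1)⁻¹ * (((2:ℝ≥0∞)^(-s)+1) * lqNorm q b) := by
            refine mul_le_mul_right ?_ _
            calc lqNorm q a
                ≤ lqNorm q (fun j => (2:ℝ≥0∞)^(-s) * b (j+1) + b j) := LPAux.lqNorm_mono hab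
              _ ≤ lqNorm q (fun j => (2:ℝ≥0∞)^(-s) * b (j+1)) + lqNorm q b :=
                  LPAux.lqNorm_add_le hq _ _
              _ = (2:ℝ≥0∞)^(-s) * lqNorm q (fun j => b (j+1)) + lqNorm q b := by
                  rw [LPAux.lqNorm_const_mul hq]
              _ = ((2:ℝ≥0∞)^(-s)+1) * lqNorm q b := by rw [LPAux.lqNorm_shift q b 1]; ring
        _ = lqNorm q b := by rw [← mul_assoc, ENNReal.inv_mul_cancel hne0 hnetop, one_mul]
    · have hbb : ∀ j, b j ≤ ∑' i : ℕ, (2:ℝ≥0∞)^(((i:ℝ)+1)*s) * a (j - 1 - i) := by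
        intro j
        calc b j ≤ (2:ℝ≥0∞) ^ ((j:ℝ)*s)
              * ∑' i : ℕ, eLpNorm (Dproj χ (j-1-i) (⇑f)) p volume :=
              mul_le_mul_right (LPAux.sproj_eLpNorm_le hχ f hn hp j) _
          _ = ∑' i : ℕ, (2:ℝ≥0∞) ^ ((j:ℝ)*s) * eLpNorm (Dproj χ (j-1-i) (⇑f)) p volume :=
              ENNReal.tsum_mul_left.symm
          _ = ∑' i : ℕ, (2:ℝ≥0∞)^(((i:ℝ)+1)*s) * a (j - 1 - i) := by
              refine tsum_congr fun i => ?_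
              rw [ha]
              dsimp only
              rw [← mul_assoc, ← ENNReal.rpow_add _ _ h20 h2top]
              congr 2
              push_cast; ring
      calc lqNorm q b
          ≤ lqNorm q (fun j => ∑' i : ℕ, (2:ℝ≥0∞)^(((i:ℝ)+1)*s) * a (j - 1 - i)) :=
            LPAux.lqNorm_mono hbb
        _ ≤ ∑' i : ℕ, lqNorm q (fun j => (2:ℝ≥0∞)^(((i:ℝ)+1)*s) * a (j - 1 - i)) :=
            LPAux.lqNorm_tsum_le hq _
        _ = ∑' i : ℕ, (2:ℝ≥0∞)^(((i:ℝ)+1)*s) * lqNorm q a := by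
            refine tsum_congr fun i => ?_
            rw [LPAux.lqNorm_const_mul hq]
            congr 1
            rw [show (fun j : ℤ => a (j - 1 - i)) = fun j : ℤ => a (j + (-1 - (i:ℤ))) by
              funext j; congr 1; ring]
            exact LPAux.lqNorm_shift q a (-1 - i)
        _ = (∑' i : ℕ, (2:ℝ≥0∞)^(((i:ℝ)+1)*s)) * lqNorm q a := ENNReal.tsum_mul_right
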